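/- arXiv:1110.1911 — 4 statements merged into one kernel-verified Lean document; each statement's English description precedes it below -/
import Mathlib

section
/- Let X be a compact metric space with diameter at most 1 and let T : X → X be a topologically transitive homeomorphism satisfying the closing property. Let α ∈ (0,1] and let ψ : X → ℂ be an α-Hölder-continuous function satisfying the periodic orbit obstruction condition: for every p ∈ X and k ≥ 1 with T^k p = p one has Σ_{j=0}^{k−1} ψ(T^j p) = 0. Then there exists an α-Hölder-continuous function φ : X → ℂ such that φ(T x) − φ(x) = ψ(x) for every x ∈ X. -/
/-- Uniform continuity from a local Hölder bound. -/
private lemma livsic_uc_of_local_holder {Y : Type*} [PseudoMetricSpace Y] {f : Y → ℂ}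
    {C α δ : ℝ} (hC : 0 < C) (hα : 0 < α) (hδ : 0 < δ)
    (h : ∀ x y : Y, dist x y < δ → ‖f x - f y‖ ≤ C * dist x y ^ α) :
    UniformContinuous f := by
  rw [Metric.uniformContinuous_iff]
  intro ε hε
  have hq : (0:ℝ) < ε / (2 * C) := by positivity
  refine ⟨min δ ((ε / (2 * C)) ^ (1 / α)), lt_min hδ (Real.rpow_pos_of_pos hq _), ?_⟩
  intro a b hab
  have h1 : dist a b < δ := hab.trans_le (min_le_left _ _)
  have h2 : dist a b ≤ (ε / (2 * C)) ^ (1 / α) := (hab.trans_le (min_le_right _ _)).le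
  have h3 : ‖f a - f b‖ ≤ C * dist a b ^ α := h a b h1
  have h4 : dist a b ^ α ≤ ((ε / (2 * C)) ^ (1 / α)) ^ α :=
    Real.rpow_le_rpow dist_nonneg h2 hα.le
  have h5 : ((ε / (2 * C)) ^ (1 / α)) ^ α = ε / (2 * C) := by
    rw [← Real.rpow_mul hq.le, one_div, inv_mul_cancel₀ hα.ne', Real.rpow_one]
  rw [Complex.dist_eq]
  calc ‖f a - f b‖ ≤ C * dist a b ^ α := h3
    _ ≤ C * (ε / (2 * C)) := by
        rw [← h5]; exact mul_le_mul_of_nonneg_left h4 hC.le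
    _ = ε / 2 := by field_simp
    _ < ε := by linarith

/-- **Livšic's theorem for complex valued cocycles.**
If `T` is a topologically transitive homeomorphism of a compact metric space with
diameter at most 1 satisfying the closing property, and `ψ : X → ℂ` is α-Hölder
continuous and satisfies the periodic orbit obstruction, then the cohomological
equation `φ ∘ T - φ = ψ` has an α-Hölder-continuous solution. -/
theorem livsic_complex
    {X : Type*} [MetricSpace X] [CompactSpace X]
    (hdiam : Metric.diam (Set.univ : Set X) ≤ 1)
    (T : X → X) (hT : IsHomeomorph T)
    (htrans : ∃ x₀ : X, Dense (Set.range fun n : ℕ => T^[n] x₀))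
    (hclosing : ∃ c lam δ₀ : ℝ, 0 < c ∧ 0 < lam ∧ 0 < δ₀ ∧
      ∀ (x : X) (k : ℕ), dist x (T^[k] x) < δ₀ →
        ∃ p : X, T^[k] p = p ∧ ∀ j ≤ k,
          dist (T^[j] x) (T^[j] p) ≤
            c * dist x (T^[k] x) * Real.exp (-lam * (min j (k - j) : ℕ)))
    (α : ℝ) (hα : α ∈ Set.Ioc (0 : ℝ) 1)
    (ψ : X → ℂ)
    (hψ : ∃ C > 0, ∀ x y : X, ‖ψ x - ψ y‖ ≤ C * dist x y ^ α)
    (hPOO : ∀ (p : X) (k : ℕ), 1 ≤ k → T^[k] p = p →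
      ∑ j ∈ Finset.range k, ψ (T^[j] p) = 0) :
    ∃ φ : X → ℂ,
      (∃ C > 0, ∀ x y : X, ‖φ x - φ y‖ ≤ C * dist x y ^ α) ∧
      ∀ x : X, φ (T x) - φ x = ψ x := by
  obtain ⟨hα0, hα1⟩ := hα
  obtain ⟨x₀, hx₀⟩ := htrans
  obtain ⟨c, lam, δ₀, hc, hlam, hδ₀, hclose⟩ := hclosing
  obtain ⟨C, hC, hHol⟩ := hψ
  set r : ℝ := Real.exp (-(lam * α)) with hr
  have hr0 : 0 < r := Real.exp_pos _
  have hr1 : r < 1 := by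
    rw [hr, Real.exp_lt_one_iff]
    nlinarith [mul_pos hlam hα0]
  -- per-term rewriting
  have hterm : ∀ (m : ℕ) (d : ℝ), 0 ≤ d →
      (c * d * Real.exp (-lam * (m : ℝ))) ^ α = c ^ α * d ^ α * r ^ m := by
    intro m d hd
    rw [Real.mul_rpow (by positivity) (Real.exp_pos _).le, Real.mul_rpow hc.le hd,
      ← Real.exp_mul, hr, ← Real.exp_nat_mul]
    have : -lam * (m : ℝ) * α = (m : ℝ) * -(lam * α) := by ring
    rw [this]
  -- geometric sum bound
  have hgeom : ∀ k : ℕ, ∑ j ∈ Finset.range k, r ^ (min j (k - j)) ≤ 2 / (1 - r) := by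
    intro k
    have hbase : ∑ j ∈ Finset.range k, r ^ j ≤ 1 / (1 - r) := by
      have h := geom_sum_Ico_le_of_lt_one hr0.le hr1 (m := 0) (n := k)
      rw [pow_zero] at h
      rwa [Finset.range_eq_Ico]
    have hstep : ∀ j ∈ Finset.range k, r ^ (min j (k - j)) ≤ r ^ j + r ^ (k - j) := by
      intro j _
      rcases min_cases j (k - j) with ⟨h, -⟩ | ⟨h, -⟩ <;> rw [h]
      · nlinarith [pow_nonneg hr0.le (k - j)]
      · nlinarith [pow_nonneg hr0.le j]
    calc ∑ j ∈ Finset.range k, r ^ (min j (k - j))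
        ≤ ∑ j ∈ Finset.range k, (r ^ j + r ^ (k - j)) := Finset.sum_le_sum hstep
      _ = (∑ j ∈ Finset.range k, r ^ j) + ∑ j ∈ Finset.range k, r ^ (k - j) := by
          rw [Finset.sum_add_distrib]
      _ ≤ 1 / (1 - r) + 1 / (1 - r) := by
          refine add_le_add hbase ?_
          have hre : ∑ j ∈ Finset.range k, r ^ (k - j) = ∑ j ∈ Finset.range k, r ^ (j + 1) := by
            rw [← Finset.sum_range_reflect]
            refine Finset.sum_congr rfl fun j hj => ?_
            have hj' := Finset.mem_range.mp hj
            congr 1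
            omega
          rw [hre]
          refine le_trans (Finset.sum_le_sum fun j _ => ?_) hbase
          exact pow_le_pow_of_le_one hr0.le hr1.le (Nat.le_succ j)
      _ = 2 / (1 - r) := by ring
  set K : ℝ := 2 / (1 - r) with hKdef
  have hK : 0 < K := by
    rw [hKdef]
    exact div_pos two_pos (by linarith)
  set C1 : ℝ := C * c ^ α * K with hC1def
  have hC1 : 0 < C1 := by
    have := Real.rpow_pos_of_pos hc α
    rw [hC1def]; positivity
  -- key estimate from the closing property and POO
  have key : ∀ (x : X) (k : ℕ), dist x (T^[k] x) < δ₀ →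
      ‖∑ j ∈ Finset.range k, ψ (T^[j] x)‖ ≤ C1 * dist x (T^[k] x) ^ α := by
    intro x k hxk
    rcases Nat.eq_zero_or_pos k with rfl | hk
    · simp only [Finset.range_zero, Finset.sum_empty, norm_zero]
      positivity
    · obtain ⟨p, hp, hclose'⟩ := hclose x k hxk
      have hsum0 := hPOO p k hk hp
      set d := dist x (T^[k] x) with hd
      have hd0 : 0 ≤ d := dist_nonneg
      calc ‖∑ j ∈ Finset.range k, ψ (T^[j] x)‖
          = ‖∑ j ∈ Finset.range k, (ψ (T^[j] x) - ψ (T^[j] p))‖ := by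
            rw [Finset.sum_sub_distrib, hsum0, sub_zero]
        _ ≤ ∑ j ∈ Finset.range k, ‖ψ (T^[j] x) - ψ (T^[j] p)‖ :=
            norm_sum_le _ _
        _ ≤ ∑ j ∈ Finset.range k,
              C * (c * d * Real.exp (-lam * ((min j (k - j) : ℕ) : ℝ))) ^ α := by
            refine Finset.sum_le_sum fun j hj => ?_
            refine (hHol (T^[j] x) (T^[j] p)).trans ?_
            refine mul_le_mul_of_nonneg_left ?_ hC.le
            exact Real.rpow_le_rpow dist_nonneg
              (hclose' j (Finset.mem_range.mp hj).le) hα0.le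
        _ = C * c ^ α * d ^ α * ∑ j ∈ Finset.range k, r ^ (min j (k - j)) := by
            rw [Finset.mul_sum]
            refine Finset.sum_congr rfl fun j _ => ?_
            rw [hterm _ _ hd0]; ring
        _ ≤ C * c ^ α * d ^ α * K := by
            refine mul_le_mul_of_nonneg_left (hgeom k) ?_
            have := Real.rpow_nonneg hd0 α
            have := Real.rpow_nonneg hc.le α
            positivity
        _ = C1 * d ^ α := by rw [hC1def]; ring
  -- Birkhoff sums along the orbit of x₀
  set S : ℕ → ℂ := fun n => ∑ j ∈ Finset.range n, ψ (T^[j] x₀) with hS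
  have horb : ∀ n m : ℕ, n ≤ m → dist (T^[n] x₀) (T^[m] x₀) < δ₀ →
      ‖S m - S n‖ ≤ C1 * dist (T^[n] x₀) (T^[m] x₀) ^ α := by
    intro n m hnm hdlt
    have h3 : T^[m - n] (T^[n] x₀) = T^[m] x₀ := by
      rw [← Function.iterate_add_apply, Nat.sub_add_cancel hnm]
    have h1 : S m - S n = ∑ j ∈ Finset.range (m - n), ψ (T^[j] (T^[n] x₀)) := by
      rw [hS]
      rw [← Finset.sum_Ico_eq_sub _ hnm, Finset.sum_Ico_eq_sum_range]
      refine Finset.sum_congr rfl fun j _ => ?_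
      rw [add_comm, Function.iterate_add_apply]
    rw [h1]
    have := key (T^[n] x₀) (m - n) (by rw [h3]; exact hdlt)
    rwa [h3] at this
  -- well-definedness on the orbit
  have hwdle : ∀ a b : ℕ, a ≤ b → T^[a] x₀ = T^[b] x₀ → S b = S a := by
    intro a b hab he
    have h := horb a b hab (by rw [← he, dist_self]; exact hδ₀)
    rw [← he, dist_self, Real.zero_rpow hα0.ne', mul_zero] at h
    have h0 : ‖S b - S a‖ = 0 := le_antisymm h (norm_nonneg _)
    have := norm_eq_zero.mp h0
    linear_combination this
  have hwd : ∀ n m : ℕ, T^[n] x₀ = T^[m] x₀ → S n = S m := by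
    intro n m h
    rcases le_total n m with h' | h'
    · exact (hwdle n m h' h).symm
    · exact hwdle m n h' h.symm
  -- the function on the dense orbit
  set A : Set X := Set.range fun n : ℕ => T^[n] x₀ with hA
  have hADense : Dense A := hx₀
  set f0 : A → ℂ := fun a => S (Classical.choose a.2) with hf0def
  have hf0 : ∀ (a : A) (n : ℕ), (a : X) = T^[n] x₀ → f0 a = S n := by
    intro a n h
    have hspec : T^[Classical.choose a.2] x₀ = (a : X) := Classical.choose_spec a.2
    exact hwd _ n (by rw [hspec, h])
  have hf0hold : ∀ a b : A, dist a b < δ₀ →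
      ‖f0 a - f0 b‖ ≤ C1 * dist a b ^ α := by
    intro a b hab
    obtain ⟨n, hn⟩ := a.2
    obtain ⟨m, hm⟩ := b.2
    replace hn : T^[n] x₀ = (a : X) := hn
    replace hm : T^[m] x₀ = (b : X) := hm
    rw [hf0 a n hn.symm, hf0 b m hm.symm]
    rw [Subtype.dist_eq] at hab ⊢
    rcases le_total n m with h | h
    · have := horb n m h (by rw [hn, hm]; exact hab)
      rw [hn, hm] at this
      rwa [norm_sub_rev] at this
    · have := horb m n h (by rw [hn, hm, dist_comm]; exact hab)
      rw [hn, hm, dist_comm (b:X) (a:X)] at this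
      exact this
  have hf0uc : UniformContinuous f0 :=
    livsic_uc_of_local_holder hC1 hα0 hδ₀ hf0hold
  -- extend to all of X
  have hui : IsUniformInducing (Subtype.val : A → X) :=
    isUniformEmbedding_subtype_val.isUniformInducing
  have hdr : DenseRange (Subtype.val : A → X) := hADense.denseRange_val
  set di : IsDenseInducing (Subtype.val : A → X) := hui.isDenseInducing hdr with hdi
  set φ : X → ℂ := di.extend f0 with hφdef
  have hφuc : UniformContinuous φ :=
    uniformContinuous_uniformly_extend hui hdr hf0uc
  have hφcont : Continuous φ := hφuc.continuous
  have hext : ∀ a : A, φ (a : X) = f0 a := fun a =>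
    di.extend_eq hf0uc.continuous a
  have hφorb : ∀ n : ℕ, φ (T^[n] x₀) = S n := by
    intro n
    have : φ ((⟨T^[n] x₀, ⟨n, rfl⟩⟩ : A) : X) = f0 ⟨T^[n] x₀, ⟨n, rfl⟩⟩ := hext _
    rw [this]
    exact hf0 _ n rfl
  -- local Hölder bound for φ by density
  have hφhold : ∀ x y : X, dist x y < δ₀ →
      ‖φ x - φ y‖ ≤ C1 * dist x y ^ α := by
    intro x y hxy
    obtain ⟨u, hu, hux⟩ := mem_closure_iff_seq_limit.mp (hADense x)
    obtain ⟨v, hv, hvy⟩ := mem_closure_iff_seq_limit.mp (hADense y)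
    have hd : Filter.Tendsto (fun n => dist (u n) (v n)) Filter.atTop (nhds (dist x y)) :=
      hux.dist hvy
    have hev : ∀ᶠ n in Filter.atTop, dist (u n) (v n) < δ₀ := hd.eventually_lt_const hxy
    have hL : Filter.Tendsto (fun n => ‖φ (u n) - φ (v n)‖) Filter.atTop
        (nhds (‖φ x - φ y‖)) := by
      have : Filter.Tendsto (fun n => φ (u n) - φ (v n)) Filter.atTop (nhds (φ x - φ y)) :=
        (((hφcont.tendsto x).comp hux).sub ((hφcont.tendsto y).comp hvy))
      exact (continuous_norm.tendsto _).comp this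
    have hR : Filter.Tendsto (fun n => C1 * dist (u n) (v n) ^ α) Filter.atTop
        (nhds (C1 * dist x y ^ α)) := by
      refine Filter.Tendsto.const_mul _ ?_
      exact ((Real.continuousAt_rpow_const (dist x y) α (Or.inr hα0.le)).tendsto).comp hd
    refine le_of_tendsto_of_tendsto hL hR ?_
    filter_upwards [hev] with n hn
    have := hf0hold ⟨u n, hu n⟩ ⟨v n, hv n⟩ (by rw [Subtype.dist_eq]; exact hn)
    rw [hext ⟨u n, hu n⟩, hext ⟨v n, hv n⟩]
    rw [Subtype.dist_eq] at this
    exact this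
  -- boundedness
  obtain ⟨z, -, hz'⟩ := isCompact_univ.exists_isMaxOn (Set.nonempty_iff_univ_nonempty.mp ⟨x₀⟩)
    (continuous_norm.comp hφcont).continuousOn
  have hz : ∀ x : X, ‖φ x‖ ≤ ‖φ z‖ := fun x =>
    isMaxOn_iff.mp hz' x trivial
  set M : ℝ := ‖φ z‖ with hM
  have hM0 : 0 ≤ M := norm_nonneg _
  set δ₁ : ℝ := min δ₀ 1 with hδ₁def
  have hδ₁ : 0 < δ₁ := lt_min hδ₀ one_pos
  have hδ₁1 : δ₁ ≤ 1 := min_le_right _ _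
  have hδ₁pow : 0 < δ₁ ^ α := Real.rpow_pos_of_pos hδ₁ α
  set C2 : ℝ := C1 + 2 * M / δ₁ ^ α with hC2def
  have hC2 : 0 < C2 := by rw [hC2def]; positivity
  refine ⟨φ, ⟨C2, hC2, ?_⟩, ?_⟩
  · intro x y
    rcases lt_or_ge (dist x y) δ₁ with h | h
    · have h1 := hφhold x y (h.trans_le (min_le_left _ _))
      refine h1.trans ?_
      have h0 : 0 ≤ dist x y ^ α := Real.rpow_nonneg dist_nonneg α
      have h2 : C1 ≤ C2 := by
        rw [hC2def]
        have : 0 ≤ 2 * M / δ₁ ^ α := by positivity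
        linarith
      exact mul_le_mul_of_nonneg_right h2 h0
    · have hb : ‖φ x - φ y‖ ≤ 2 * M := by
        calc ‖φ x - φ y‖ ≤ ‖φ x‖ + ‖φ y‖ :=
              norm_sub_le _ _
          _ ≤ M + M := add_le_add (hz x) (hz y)
          _ = 2 * M := by ring
      have hpow : δ₁ ^ α ≤ dist x y ^ α := Real.rpow_le_rpow hδ₁.le h hα0.le
      calc ‖φ x - φ y‖ ≤ 2 * M := hb
        _ = (2 * M / δ₁ ^ α) * δ₁ ^ α := by field_simp
        _ ≤ (2 * M / δ₁ ^ α) * dist x y ^ α := by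
            refine mul_le_mul_of_nonneg_left hpow ?_
            positivity
        _ ≤ C2 * dist x y ^ α := by
            refine mul_le_mul_of_nonneg_right ?_ (Real.rpow_nonneg dist_nonneg α)
            rw [hC2def]; linarith
  · -- the cohomological equation
    have hψuc : UniformContinuous ψ :=
      livsic_uc_of_local_holder hC hα0 one_pos (fun x y _ => hHol x y)
    have heq : Set.EqOn (fun x => φ (T x) - φ x) ψ A := by
      rintro x ⟨n, rfl⟩
      simp only
      have h1 : T (T^[n] x₀) = T^[n + 1] x₀ := (Function.iterate_succ_apply' T n x₀).symm
      rw [h1, hφorb (n + 1), hφorb n, hS]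
      simp [Finset.sum_range_succ]
    have hfun : (fun x => φ (T x) - φ x) = ψ :=
      Continuous.ext_on hADense ((hφcont.comp hT.continuous).sub hφcont)
        hψuc.continuous heq
    intro x
    exact congrFun hfun x
end

section
/- Let X be a compact metric space with diameter at most 1, let T : X → X be a topologically transitive homeomorphism satisfying the closing property, and let α ∈ (0,1]. Then there exists a constant K > 0, depending only on X, T and α, such that for every α-Hölder-continuous function ψ : X → ℂ satisfying the periodic orbit obstruction condition (Σ_{j=0}^{k−1} ψ(T^j p) = 0 whenever T^k p = p), there exists an α-Hölder-continuous function φ : X → ℂ with φ(T x) − φ(x) = ψ(x) for all x ∈ X and with Hölder seminorm [φ]_α ≤ K·([ψ]_α + ‖ψ‖), where ‖ψ‖ = sup_{x ∈ X}|ψ(x)|. -/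
open Filter Topology

private lemma geom_aux {r : ℝ} (h0 : 0 ≤ r) (h1 : r < 1) (k : ℕ) :
    ∑ j ∈ Finset.range k, r ^ j ≤ 1 / (1 - r) := by
  have h1' : 0 < 1 - r := by linarith
  rw [geom_sum_eq (show r ≠ 1 from fun h => by rw [h] at h1; exact lt_irrefl _ h1) k]
  have he : (r ^ k - 1) / (r - 1) = (1 - r ^ k) / (1 - r) := by
    rw [← neg_div_neg_eq]; ring_nf
  rw [he, div_le_div_iff_of_pos_right h1']
  have hk : 0 ≤ r ^ k := pow_nonneg h0 k
  linarith

private lemma sum_min_aux {r : ℝ} (h0 : 0 ≤ r) (h1 : r < 1) (k : ℕ) :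
    ∑ j ∈ Finset.range k, r ^ min j (k - j) ≤ 2 / (1 - r) := by
  have key : ∀ j ∈ Finset.range k, r ^ min j (k - j) ≤ r ^ j + r ^ (k - 1 - j) := by
    intro j hj
    have hjk : j < k := Finset.mem_range.1 hj
    rcases le_total j (k - j) with hm | hm
    · rw [min_eq_left hm]
      have : 0 ≤ r ^ (k - 1 - j) := pow_nonneg h0 _
      linarith
    · rw [min_eq_right hm]
      have h2 : r ^ (k - j) ≤ r ^ (k - 1 - j) :=
        pow_le_pow_of_le_one h0 h1.le (by omega)
      have : 0 ≤ r ^ j := pow_nonneg h0 _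
      linarith
  calc ∑ j ∈ Finset.range k, r ^ min j (k - j)
      ≤ ∑ j ∈ Finset.range k, (r ^ j + r ^ (k - 1 - j)) := Finset.sum_le_sum key
    _ = ∑ j ∈ Finset.range k, r ^ j + ∑ j ∈ Finset.range k, r ^ (k - 1 - j) := by
        rw [Finset.sum_add_distrib]
    _ = ∑ j ∈ Finset.range k, r ^ j + ∑ j ∈ Finset.range k, r ^ j := by
        rw [Finset.sum_range_reflect (fun j => r ^ j) k]
    _ ≤ 1 / (1 - r) + 1 / (1 - r) := add_le_add (geom_aux h0 h1 k) (geom_aux h0 h1 k)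
    _ = 2 / (1 - r) := by ring

set_option maxHeartbeats 2000000 in
/-- **Livšic's theorem with estimates.**
There is a constant `K`, depending only on `X`, `T` and `α`, such that every
α-Hölder-continuous `ψ : X → ℂ` satisfying the periodic orbit obstruction admits an
α-Hölder-continuous solution `φ` of `φ ∘ T - φ = ψ` with `[φ]_α ≤ K ([ψ]_α + ‖ψ‖)`. -/
theorem livsic_complex_with_estimate
    {X : Type*} [MetricSpace X] [CompactSpace X]
    (hdiam : Metric.diam (Set.univ : Set X) ≤ 1)
    (T : X → X) (hT : IsHomeomorph T)
    (htrans : ∃ x₀ : X, Dense (Set.range fun n : ℕ => T^[n] x₀))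
    (hclosing : ∃ c lam δ₀ : ℝ, 0 < c ∧ 0 < lam ∧ 0 < δ₀ ∧
      ∀ (x : X) (k : ℕ), dist x (T^[k] x) < δ₀ →
        ∃ p : X, T^[k] p = p ∧ ∀ j ≤ k,
          dist (T^[j] x) (T^[j] p) ≤
            c * dist x (T^[k] x) * Real.exp (-lam * (min j (k - j) : ℕ)))
    (α : ℝ) (hα : α ∈ Set.Ioc (0 : ℝ) 1) :
    ∃ K > 0, ∀ ψ : X → ℂ,
      (∃ C > 0, ∀ x y : X, ‖ψ x - ψ y‖ ≤ C * dist x y ^ α) →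
      (∀ (p : X) (k : ℕ), 1 ≤ k → T^[k] p = p →
        ∑ j ∈ Finset.range k, ψ (T^[j] p) = 0) →
      ∃ φ : X → ℂ,
        (∀ x y : X, ‖φ x - φ y‖ ≤
          K * (sInf {C : ℝ | 0 ≤ C ∧
                ∀ x y : X, ‖ψ x - ψ y‖ ≤ C * dist x y ^ α}
              + ⨆ z : X, ‖ψ z‖) * dist x y ^ α) ∧
        ∀ x : X, φ (T x) - φ x = ψ x := by
  obtain ⟨x₀, hx₀⟩ := htrans
  obtain ⟨c, lam, δ₀, hc, hlam, hδ₀, hclose⟩ := hclosing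
  have hα0 : (0 : ℝ) < α := hα.1
  obtain ⟨e, hedef⟩ : ∃ e : ℕ → X, e = fun n => T^[n] x₀ := ⟨_, rfl⟩
  have hdense : DenseRange e := by rw [hedef]; exact hx₀
  have hd1 : ∀ a b : X, dist a b ≤ 1 := fun a b =>
    le_trans (Metric.dist_le_diam_of_mem Metric.isBounded_of_compactSpace
      (Set.mem_univ a) (Set.mem_univ b)) hdiam
  -- finite δ₀-dense initial orbit segment
  have hcov : ∃ M : ℕ, ∀ x : X, ∃ i ≤ M, dist x (e i) < δ₀ := by
    have hsub : (Set.univ : Set X) ⊆ ⋃ n, Metric.ball (e n) δ₀ := by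
      intro x _
      obtain ⟨n, hn⟩ := Metric.denseRange_iff.1 hdense x δ₀ hδ₀
      exact Set.mem_iUnion.2 ⟨n, Metric.mem_ball.2 hn⟩
    obtain ⟨t, ht⟩ := isCompact_univ.elim_finite_subcover _
      (fun n : ℕ => Metric.isOpen_ball) hsub
    refine ⟨t.sup id, fun x => ?_⟩
    obtain ⟨i, hit, hx⟩ := Set.mem_iUnion₂.1 (ht (Set.mem_univ x))
    exact ⟨i, Finset.le_sup (f := id) hit, Metric.mem_ball.1 hx⟩
  obtain ⟨M, hM⟩ := hcov
  obtain ⟨r, hrdef⟩ : ∃ r : ℝ, r = Real.exp (-(lam * α)) := ⟨_, rfl⟩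
  have hr0 : 0 < r := hrdef ▸ Real.exp_pos _
  have hr1 : r < 1 := by rw [hrdef]; exact Real.exp_lt_one_iff.2 (by nlinarith)
  have h1r : 0 < 1 - r := by linarith
  obtain ⟨H, hHdef⟩ : ∃ H : ℝ, H = c ^ α * (2 / (1 - r)) := ⟨_, rfl⟩
  have hH0 : 0 ≤ H := by
    rw [hHdef]
    exact mul_nonneg (Real.rpow_nonneg hc.le α) (by positivity)
  obtain ⟨δ₁, hδ₁def⟩ : ∃ δ₁ : ℝ, δ₁ = min δ₀ 1 := ⟨_, rfl⟩
  have hδ₁ : 0 < δ₁ := by rw [hδ₁def]; exact lt_min hδ₀ one_pos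
  have hδ₁α : 0 < δ₁ ^ α := Real.rpow_pos_of_pos hδ₁ α
  obtain ⟨K, hKdef⟩ : ∃ K : ℝ, K = H + (2 * M + 2 * H) / δ₁ ^ α + 1 := ⟨_, rfl⟩
  have hKc : 0 ≤ (2 * M + 2 * H) / δ₁ ^ α :=
    div_nonneg (by positivity) hδ₁α.le
  have hKpos : 0 < K := by rw [hKdef]; linarith
  refine ⟨K, hKpos, ?_⟩
  intro ψ hψ hobs
  obtain ⟨Cψ, hCψdef⟩ : ∃ C : ℝ, C = sInf {C : ℝ | 0 ≤ C ∧
      ∀ x y : X, ‖ψ x - ψ y‖ ≤ C * dist x y ^ α} := ⟨_, rfl⟩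
  obtain ⟨C₀, hC₀pos, hC₀⟩ := hψ
  have hmem : C₀ ∈ {C : ℝ | 0 ≤ C ∧
      ∀ x y : X, ‖ψ x - ψ y‖ ≤ C * dist x y ^ α} := ⟨hC₀pos.le, hC₀⟩
  have hCψ0 : 0 ≤ Cψ := by
    rw [hCψdef]; exact le_csInf ⟨C₀, hmem⟩ (fun b hb => hb.1)
  have hCψ : ∀ x y : X, ‖ψ x - ψ y‖ ≤ Cψ * dist x y ^ α := by
    intro x y
    by_cases hxy : x = y
    · subst hxy
      simp only [sub_self, norm_zero]
      positivity
    · have hd : 0 < dist x y := dist_pos.2 hxy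
      have hdα : 0 < dist x y ^ α := Real.rpow_pos_of_pos hd α
      rw [← div_le_iff₀ hdα, hCψdef]
      exact le_csInf ⟨C₀, hmem⟩ (fun b hb => (div_le_iff₀ hdα).2 (hb.2 x y))
  have hXne : Nonempty X := ⟨x₀⟩
  obtain ⟨Nψ, hNψdef⟩ : ∃ N : ℝ, N = ⨆ z : X, ‖ψ z‖ := ⟨_, rfl⟩
  have hbdd : BddAbove (Set.range fun z : X => ‖ψ z‖) := by
    refine ⟨‖ψ x₀‖ + Cψ, ?_⟩
    rintro _ ⟨z, rfl⟩
    have h1 : ‖ψ z‖ ≤ ‖ψ x₀‖ + ‖ψ z - ψ x₀‖ := by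
      calc ‖ψ z‖ = ‖ψ x₀ + (ψ z - ψ x₀)‖ := by congr 1; ring
        _ ≤ ‖ψ x₀‖ + ‖ψ z - ψ x₀‖ := norm_add_le _ _
    have h2 : ‖ψ z - ψ x₀‖ ≤ Cψ * dist z x₀ ^ α := hCψ z x₀
    have h3 : dist z x₀ ^ α ≤ 1 := Real.rpow_le_one dist_nonneg (hd1 _ _) hα0.le
    nlinarith
  have hN : ∀ z : X, ‖ψ z‖ ≤ Nψ := by
    intro z; rw [hNψdef]; exact le_ciSup hbdd z
  have hN0 : 0 ≤ Nψ := le_trans (norm_nonneg _) (hN x₀)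
  obtain ⟨B, hBdef⟩ : ∃ B : ℝ, B = K * (Cψ + Nψ) := ⟨_, rfl⟩
  have hB0 : 0 ≤ B := by rw [hBdef]; exact mul_nonneg hKpos.le (by linarith)
  -- Birkhoff sums along the orbit of x₀
  obtain ⟨g, hgdef⟩ : ∃ g : ℕ → ℂ, g = fun n => ∑ j ∈ Finset.range n, ψ (e j) := ⟨_, rfl⟩
  have hgn : ∀ n : ℕ, g n = ∑ j ∈ Finset.range n, ψ (e j) := fun n => by rw [hgdef]
  have hiter : ∀ m j : ℕ, e (m + j) = T^[j] (e m) := by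
    intro m j
    rw [hedef]
    simp only
    rw [Nat.add_comm, Function.iterate_add_apply]
  have hgsplit : ∀ m k : ℕ, g (m + k) - g m = ∑ j ∈ Finset.range k, ψ (T^[j] (e m)) := by
    intro m k
    induction k with
    | zero => simp
    | succ k ih =>
      have hadd : m + (k + 1) = (m + k) + 1 := by omega
      have hgs : g ((m + k) + 1) = g (m + k) + ψ (e (m + k)) := by
        rw [hgn, hgn, Finset.sum_range_succ]
      rw [Finset.sum_range_succ, ← ih, hadd, hgs, hiter m k]
      ring
  -- key estimate from the closing property
  have hkey : ∀ m k : ℕ, dist (e m) (e (m + k)) < δ₀ →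
      ‖g (m + k) - g m‖ ≤ H * Cψ * dist (e m) (e (m + k)) ^ α := by
    intro m k hmk
    have hek : e (m + k) = T^[k] (e m) := hiter m k
    obtain ⟨p, hp, hpj⟩ := hclose (e m) k (by rw [← hek]; exact hmk)
    set d : ℝ := dist (e m) (e (m + k)) with hd
    have hd0 : 0 ≤ d := dist_nonneg
    rcases Nat.eq_zero_or_pos k with h0 | h1
    · subst h0
      simp only [Nat.add_zero, sub_self, norm_zero]
      positivity
    · have hsum0 : ∑ j ∈ Finset.range k, ψ (T^[j] p) = 0 := hobs p k h1 hp
      rw [hgsplit m k]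
      have heq : ∑ j ∈ Finset.range k, ψ (T^[j] (e m)) =
          ∑ j ∈ Finset.range k, (ψ (T^[j] (e m)) - ψ (T^[j] p)) := by
        rw [Finset.sum_sub_distrib, hsum0, sub_zero]
      rw [heq]
      calc ‖∑ j ∈ Finset.range k, (ψ (T^[j] (e m)) - ψ (T^[j] p))‖
          ≤ ∑ j ∈ Finset.range k, ‖ψ (T^[j] (e m)) - ψ (T^[j] p)‖ :=
            norm_sum_le _ _
        _ ≤ ∑ j ∈ Finset.range k,
              Cψ * ((c * d * Real.exp (-lam * (min j (k - j) : ℕ))) ^ α) := by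
            refine Finset.sum_le_sum fun j hj => ?_
            refine (hCψ _ _).trans ?_
            have hj' : j ≤ k := (Finset.mem_range.1 hj).le
            have hdist := hpj j hj'
            rw [← hek] at hdist
            exact mul_le_mul_of_nonneg_left
              (Real.rpow_le_rpow dist_nonneg hdist hα0.le) hCψ0
        _ = Cψ * (c ^ α * d ^ α) * ∑ j ∈ Finset.range k, r ^ min j (k - j) := by
            rw [Finset.mul_sum]
            refine Finset.sum_congr rfl fun j hj => ?_
            rw [Real.mul_rpow (mul_nonneg hc.le hd0) (Real.exp_nonneg _),
              Real.mul_rpow hc.le hd0, ← Real.exp_mul]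
            have hexp : Real.exp (-lam * (min j (k - j) : ℕ) * α) = r ^ min j (k - j) := by
              rw [hrdef, ← Real.exp_nat_mul]
              congr 1
              push_cast
              ring
            rw [hexp]
            ring
        _ ≤ Cψ * (c ^ α * d ^ α) * (2 / (1 - r)) := by
            refine mul_le_mul_of_nonneg_left (sum_min_aux hr0.le hr1 k) ?_
            have h7 : 0 ≤ c ^ α * d ^ α :=
              mul_nonneg (Real.rpow_nonneg hc.le α) (Real.rpow_nonneg hd0 α)
            exact mul_nonneg hCψ0 h7
        _ = H * Cψ * d ^ α := by rw [hHdef]; ring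
  -- uniform bound on |g|
  have hstep : ∀ n : ℕ, ‖g n‖ ≤ n * Nψ := by
    intro n
    rw [hgn]
    calc ‖∑ j ∈ Finset.range n, ψ (e j)‖
        ≤ ∑ j ∈ Finset.range n, ‖ψ (e j)‖ := norm_sum_le _ _
      _ ≤ ∑ _j ∈ Finset.range n, Nψ := Finset.sum_le_sum fun j _ => hN _
      _ = n * Nψ := by simp [Finset.sum_const, nsmul_eq_mul]
  have hgbd : ∀ n : ℕ, ‖g n‖ ≤ M * Nψ + H * Cψ := by
    intro n
    rcases le_or_gt n M with h | h
    · refine (hstep n).trans ?_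
      have h1 : (n : ℝ) ≤ M := Nat.cast_le.2 h
      nlinarith [mul_nonneg hH0 hCψ0]
    · obtain ⟨i, hiM, hix⟩ := hM (e n)
      have hin : i ≤ n := le_of_lt (lt_of_le_of_lt hiM h)
      have hni : i + (n - i) = n := Nat.add_sub_cancel' hin
      have hdist : dist (e i) (e (i + (n - i))) < δ₀ := by
        rw [hni, dist_comm]; exact hix
      have hkey' := hkey i (n - i) hdist
      rw [hni] at hkey'
      have hdle : dist (e i) (e n) ^ α ≤ 1 :=
        Real.rpow_le_one dist_nonneg (hd1 _ _) hα0.le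
      have h2 : ‖g n - g i‖ ≤ H * Cψ := by
        refine hkey'.trans ?_
        have hHC : 0 ≤ H * Cψ := mul_nonneg hH0 hCψ0
        nlinarith [Real.rpow_nonneg (dist_nonneg : (0:ℝ) ≤ dist (e i) (e n)) α]
      have h3 : ‖g i‖ ≤ M * Nψ :=
        (hstep i).trans (mul_le_mul_of_nonneg_right (Nat.cast_le.2 hiM) hN0)
      calc ‖g n‖ = ‖g i + (g n - g i)‖ := by congr 1; ring
        _ ≤ ‖g i‖ + ‖g n - g i‖ := norm_add_le _ _
        _ ≤ M * Nψ + H * Cψ := add_le_add h3 h2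
  -- global Hölder estimate along the orbit
  have hL1 : ∀ m n : ℕ, ‖g m - g n‖ ≤ B * dist (e m) (e n) ^ α := by
    have main : ∀ m n : ℕ, m ≤ n →
        ‖g n - g m‖ ≤ B * dist (e m) (e n) ^ α := by
      intro m n hmn
      have hn : m + (n - m) = n := Nat.add_sub_cancel' hmn
      have hd0 : (0:ℝ) ≤ dist (e m) (e n) := dist_nonneg
      have hdα0 : 0 ≤ dist (e m) (e n) ^ α := Real.rpow_nonneg hd0 α
      rcases lt_or_ge (dist (e m) (e n)) δ₀ with hlt | hge
      · have hkey' := hkey m (n - m) (by rw [hn]; exact hlt)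
        rw [hn] at hkey'
        refine hkey'.trans ?_
        have hHK : H * Cψ ≤ K * (Cψ + Nψ) := by
          have hK2 : H ≤ K := by rw [hKdef]; linarith
          nlinarith
        rw [hBdef]
        exact mul_le_mul_of_nonneg_right hHK hdα0
      · have hδ₁d : δ₁ ≤ dist (e m) (e n) := le_trans (hδ₁def ▸ min_le_left δ₀ 1) hge
        have hδα : δ₁ ^ α ≤ dist (e m) (e n) ^ α :=
          Real.rpow_le_rpow hδ₁.le hδ₁d hα0.le
        have hsub : ‖g n - g m‖ ≤ ‖g n‖ + ‖g m‖ := by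
          have h := norm_sub_le (g n) (g m)
          simpa using h
        have h2 : ‖g n - g m‖ ≤ 2 * M * Nψ + 2 * H * Cψ := by
          have hb1 := hgbd n
          have hb2 := hgbd m
          linarith
        have h3 : 2 * M * Nψ + 2 * H * Cψ ≤ (2 * M + 2 * H) * (Cψ + Nψ) := by
          nlinarith [mul_nonneg hH0 hN0, mul_nonneg (show (0:ℝ) ≤ (M:ℝ) from Nat.cast_nonneg M) hCψ0]
        have h4 : (2 * M + 2 * H) * (Cψ + Nψ) ≤ B * dist (e m) (e n) ^ α := by
          have h5 : (2 * M + 2 * H : ℝ) = (2 * M + 2 * H) / δ₁ ^ α * δ₁ ^ α := by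
            field_simp
          have h6 : (2 * M + 2 * H) / δ₁ ^ α ≤ K := by rw [hKdef]; linarith
          have hCN : (0:ℝ) ≤ Cψ + Nψ := by linarith
          rw [hBdef]
          calc (2 * M + 2 * H) * (Cψ + Nψ)
              = (2 * M + 2 * H) / δ₁ ^ α * δ₁ ^ α * (Cψ + Nψ) := by rw [← h5]
            _ ≤ K * dist (e m) (e n) ^ α * (Cψ + Nψ) := by
                refine mul_le_mul_of_nonneg_right ?_ hCN
                calc (2 * M + 2 * H) / δ₁ ^ α * δ₁ ^ α
                    ≤ K * δ₁ ^ α := mul_le_mul_of_nonneg_right h6 hδ₁α.le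
                  _ ≤ K * dist (e m) (e n) ^ α :=
                      mul_le_mul_of_nonneg_left hδα hKpos.le
            _ = K * (Cψ + Nψ) * dist (e m) (e n) ^ α := by ring
        linarith
    intro m n
    rcases le_total m n with h | h
    · rw [norm_sub_rev]
      exact main m n h
    · rw [dist_comm]
      exact main n m h
  -- selection of approximating orbit points
  have hselx : ∀ (x : X) (i : ℕ), ∃ n : ℕ, dist x (e n) < 1 / ((i:ℝ) + 1) :=
    fun x i => Metric.denseRange_iff.1 hdense x _ (by positivity)
  choose sel hsel using hselx
  have htend : ∀ x : X, Filter.Tendsto (fun i => e (sel x i)) Filter.atTop (nhds x) := by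
    intro x
    rw [tendsto_iff_dist_tendsto_zero]
    refine squeeze_zero (fun i => dist_nonneg) (fun i => ?_)
      tendsto_one_div_add_atTop_nhds_zero_nat
    rw [dist_comm]
    exact (hsel x i).le
  -- uniform-continuity-type modulus for g along e
  have hmod : ∀ ε > (0:ℝ), ∃ δ > (0:ℝ), ∀ a b : ℕ,
      dist (e a) (e b) < δ → ‖g a - g b‖ < ε := by
    intro ε hε
    have hB1 : (0:ℝ) < B + 1 := by linarith
    have hq : (0:ℝ) < ε / (B + 1) := div_pos hε hB1
    refine ⟨(ε / (B + 1)) ^ α⁻¹, Real.rpow_pos_of_pos hq _, fun a b hab => ?_⟩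
    have h1 : dist (e a) (e b) ^ α < ((ε / (B + 1)) ^ α⁻¹) ^ α :=
      Real.rpow_lt_rpow dist_nonneg hab hα0
    rw [Real.rpow_inv_rpow hq.le (ne_of_gt hα0)] at h1
    have hdα0 : 0 ≤ dist (e a) (e b) ^ α := Real.rpow_nonneg dist_nonneg α
    calc ‖g a - g b‖ ≤ B * dist (e a) (e b) ^ α := hL1 a b
      _ ≤ (B + 1) * dist (e a) (e b) ^ α := by nlinarith
      _ < (B + 1) * (ε / (B + 1)) := (mul_lt_mul_iff_right₀ hB1).2 h1
      _ = ε := by field_simp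
  -- existence of limits
  have hlim : ∀ x : X, ∃ z : ℂ,
      Filter.Tendsto (fun i => g (sel x i)) Filter.atTop (nhds z) := by
    intro x
    refine cauchySeq_tendsto_of_complete ?_
    rw [Metric.cauchySeq_iff]
    intro ε hε
    obtain ⟨δ, hδpos, hδ'⟩ := hmod ε hε
    have hca : CauchySeq (fun i => e (sel x i)) := (htend x).cauchySeq
    obtain ⟨N, hN2⟩ := Metric.cauchySeq_iff.1 hca δ hδpos
    refine ⟨N, fun a ha b hb => ?_⟩
    rw [Complex.dist_eq]
    exact hδ' _ _ (hN2 a ha b hb)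
  choose φ hφ using hlim
  -- master convergence property
  have hφ' : ∀ (x : X) (u : ℕ → ℕ),
      Filter.Tendsto (fun i => e (u i)) Filter.atTop (nhds x) →
      Filter.Tendsto (fun i => g (u i)) Filter.atTop (nhds (φ x)) := by
    intro x u hu
    refine Filter.Tendsto.congr_dist (f₁ := fun i => g (sel x i)) (hφ x) ?_
    rw [Metric.tendsto_atTop]
    intro ε hε
    obtain ⟨δ, hδpos, hδ'⟩ := hmod ε hε
    obtain ⟨N1, hN1⟩ := Metric.tendsto_atTop.1 (htend x) (δ / 2) (by positivity)
    obtain ⟨N2, hN2⟩ := Metric.tendsto_atTop.1 hu (δ / 2) (by positivity)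
    refine ⟨max N1 N2, fun i hi => ?_⟩
    have h1 := hN1 i (le_trans (le_max_left _ _) hi)
    have h2 := hN2 i (le_trans (le_max_right _ _) hi)
    have hd : dist (e (sel x i)) (e (u i)) < δ := by
      calc dist (e (sel x i)) (e (u i))
          ≤ dist (e (sel x i)) x + dist x (e (u i)) := dist_triangle _ _ _
        _ < δ / 2 + δ / 2 := by
            rw [dist_comm x (e (u i))]
            exact add_lt_add h1 h2
        _ = δ := by ring
    have h3 := hδ' _ _ hd
    rw [Real.dist_eq, sub_zero, abs_of_nonneg dist_nonneg, Complex.dist_eq]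
    exact h3
  simp only [← hCψdef, ← hNψdef, ← hBdef]
  refine ⟨φ, ?_, ?_⟩
  · -- Hölder estimate for φ
    intro x y
    have h1 : Filter.Tendsto (fun i => ‖g (sel x i) - g (sel y i)‖)
        Filter.atTop (nhds (‖φ x - φ y‖)) :=
      (continuous_norm.tendsto _).comp ((hφ x).sub (hφ y))
    have h2 : Filter.Tendsto
        (fun i : ℕ => B * (dist x y + (1 / ((i:ℝ) + 1) + 1 / ((i:ℝ) + 1))) ^ α)
        Filter.atTop (nhds (B * dist x y ^ α)) := by
      have ht0 := tendsto_one_div_add_atTop_nhds_zero_nat (𝕜 := ℝ)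
      have hcst : Filter.Tendsto (fun _ : ℕ => dist x y) Filter.atTop (nhds (dist x y)) :=
        tendsto_const_nhds
      have hone : Filter.Tendsto
          (fun i : ℕ => dist x y + (1 / ((i:ℝ) + 1) + 1 / ((i:ℝ) + 1)))
          Filter.atTop (nhds (dist x y)) := by
        have hsum := hcst.add (ht0.add ht0)
        simpa using hsum
      have hcont : ContinuousAt (fun t : ℝ => B * t ^ α) (dist x y) :=
        continuousAt_const.mul (Real.continuousAt_rpow_const _ _ (Or.inr hα0.le))
      exact hcont.tendsto.comp hone
    refine le_of_tendsto_of_tendsto' h1 h2 fun i => ?_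
    have hd : dist (e (sel x i)) (e (sel y i))
        ≤ dist x y + (1 / ((i:ℝ) + 1) + 1 / ((i:ℝ) + 1)) := by
      have ht4 := dist_triangle4 (e (sel x i)) x y (e (sel y i))
      have hx1 : dist (e (sel x i)) x < 1 / ((i:ℝ) + 1) := by
        rw [dist_comm]; exact hsel x i
      have hy1 : dist y (e (sel y i)) < 1 / ((i:ℝ) + 1) := hsel y i
      linarith
    calc ‖g (sel x i) - g (sel y i)‖
        ≤ B * dist (e (sel x i)) (e (sel y i)) ^ α := hL1 _ _
      _ ≤ B * (dist x y + (1 / ((i:ℝ) + 1) + 1 / ((i:ℝ) + 1))) ^ α :=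
          mul_le_mul_of_nonneg_left (Real.rpow_le_rpow dist_nonneg hd hα0.le) hB0
  · -- cocycle equation
    intro x
    have h1 : Filter.Tendsto (fun i => e (sel x i + 1)) Filter.atTop (nhds (T x)) := by
      have hfe : (fun i => e (sel x i + 1)) = fun i => T (e (sel x i)) := by
        funext i
        rw [hedef]
        simp only
        rw [Function.iterate_succ_apply']
      rw [hfe]
      exact (hT.continuous.tendsto x).comp (htend x)
    have h2 := hφ' (T x) _ h1
    have hψc : Filter.Tendsto (fun i => ψ (e (sel x i))) Filter.atTop (nhds (ψ x)) := by
      rw [tendsto_iff_dist_tendsto_zero]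
      have hb : ∀ i : ℕ, dist (ψ (e (sel x i))) (ψ x) ≤ Cψ * (1 / ((i:ℝ) + 1)) ^ α := by
        intro i
        rw [Complex.dist_eq]
        refine (hCψ _ _).trans ?_
        refine mul_le_mul_of_nonneg_left ?_ hCψ0
        refine Real.rpow_le_rpow dist_nonneg ?_ hα0.le
        rw [dist_comm]
        exact (hsel x i).le
      refine squeeze_zero (fun i => dist_nonneg) hb ?_
      have ht0 : Filter.Tendsto (fun i : ℕ => (1 / ((i:ℝ) + 1)) ^ α)
          Filter.atTop (nhds 0) := by
        have h := (Real.continuousAt_rpow_const 0 α (Or.inr hα0.le)).tendsto.comp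
          tendsto_one_div_add_atTop_nhds_zero_nat
        simpa [Real.zero_rpow (ne_of_gt hα0), Function.comp_def] using h
      have h := ht0.const_mul Cψ
      simpa using h
    have h3 : Filter.Tendsto (fun i => g (sel x i + 1)) Filter.atTop (nhds (φ x + ψ x)) := by
      have hfe : (fun i => g (sel x i + 1)) = fun i => g (sel x i) + ψ (e (sel x i)) := by
        funext i
        rw [hgn, hgn, Finset.sum_range_succ]
      rw [hfe]
      exact (hφ x).add hψc
    have h4 := tendsto_nhds_unique h2 h3
    rw [h4]
    ring
end

section
/- Let X be a compact metric space with diameter at most 1, let d ≥ 1, R > 0, C > 0, α ∈ (0,1], and for each 1 ≤ i ≤ d and each multi-index j ∈ ℕ^d with |j| ≥ 1 let t^i_j : X → ℂ be a (C/R^{|j|}, α)-Hölder-continuous function that vanishes at some point of X. Then: (1) for every x ∈ X and every i, the power series Σ_{|j| ≥ 1} t^i_j(x)·Z^j converges absolutely at every Z = (z₁, …, z_d) ∈ ℂ^d with |z_s| < R for all s; (2) for every δ ∈ (0,1) and all x, y ∈ X, Σ_{i=1}^{d} Σ_{|j| ≥ 1} |t^i_j(x) − t^i_j(y)|²·(δR)^{2|j|}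 ≤ d·C²·((1 − δ²)^{−d} − 1)·dist(x,y)^{2α}. -/
open scoped ENNReal

lemma tsum_pi_pow_aux (d : ℕ) (q : Fin d → ℝ≥0∞) :
    ∑' j : Fin d → ℕ, ∏ s, q s ^ j s = ∏ s, ∑' n : ℕ, q s ^ n := by
  induction d with
  | zero =>
      rw [tsum_eq_single (default : Fin 0 → ℕ)
        (fun b' hb' => absurd (Subsingleton.elim b' default) hb')]
      simp
  | succ d ih =>
      rw [← (Fin.consEquiv fun _ : Fin (d + 1) => ℕ).tsum_eq, Fin.prod_univ_succ]
      have h1 : ∀ p : ℕ × (Fin d → ℕ),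
          ∏ s : Fin (d + 1), q s ^ (Fin.consEquiv (fun _ => ℕ) p) s
            = q 0 ^ p.1 * ∏ s : Fin d, q s.succ ^ p.2 s := by
        intro p
        rw [Fin.prod_univ_succ]
        simp [Fin.consEquiv]
      calc ∑' p : ℕ × (Fin d → ℕ), ∏ s : Fin (d + 1), q s ^ (Fin.consEquiv (fun _ => ℕ) p) s
          = ∑' p : ℕ × (Fin d → ℕ), q 0 ^ p.1 * ∏ s : Fin d, q s.succ ^ p.2 s :=
            tsum_congr h1
        _ = ∑' (a : ℕ) (b : Fin d → ℕ), q 0 ^ a * ∏ s : Fin d, q s.succ ^ b s :=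
            ENNReal.tsum_prod'
        _ = (∑' n : ℕ, q 0 ^ n) * ∏ s : Fin d, ∑' n : ℕ, q s.succ ^ n := by
            rw [← ih fun s => q s.succ]
            simp_rw [ENNReal.tsum_mul_left, ENNReal.tsum_mul_right]

/-- The sum over multi-indices with `|j| ≥ 1` of `(δ²)^{|j|}`. -/
lemma tsum_subtype_geom_aux (d : ℕ) {δ : ℝ} (hδ0 : 0 < δ) (hδ1 : δ < 1) :
    ∑' j : {j : Fin d → ℕ // 1 ≤ ∑ s, j s}, ENNReal.ofReal (δ ^ 2) ^ (∑ s, j.1 s)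
      = ENNReal.ofReal (((1 - δ ^ 2) ^ d)⁻¹ - 1) := by
  have hδ2 : δ ^ 2 < 1 := by nlinarith
  have hδ2' : (0:ℝ) ≤ δ ^ 2 := sq_nonneg δ
  have hpos : (0:ℝ) < 1 - δ ^ 2 := by linarith
  set q : ℝ≥0∞ := ENNReal.ofReal (δ ^ 2) with hqdef
  set f : (Fin d → ℕ) → ℝ≥0∞ := fun j => q ^ (∑ s, j s) with hfdef
  have htotal : ∑' j : Fin d → ℕ, f j = ((1 - q)⁻¹) ^ d := by
    have : ∀ j : Fin d → ℕ, f j = ∏ s, q ^ j s := by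
      intro j; rw [hfdef, Finset.prod_pow_eq_pow_sum]
    rw [tsum_congr this, tsum_pi_pow_aux]
    simp [ENNReal.tsum_geometric]
  have hsplit :
      ∑' j : ({j : Fin d → ℕ | 1 ≤ ∑ s, j s} : Set (Fin d → ℕ)), f j.1
        + ∑' j : ({j : Fin d → ℕ | 1 ≤ ∑ s, j s}ᶜ : Set (Fin d → ℕ)), f j.1
        = ∑' j : Fin d → ℕ, f j :=
    Summable.tsum_add_tsum_compl ENNReal.summable ENNReal.summable
  have hcompl : ({j : Fin d → ℕ | 1 ≤ ∑ s, j s}ᶜ : Set (Fin d → ℕ)) = {0} := by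
    ext j
    simp only [Set.mem_compl_iff, Set.mem_setOf_eq, not_le, Nat.lt_one_iff,
      Set.mem_singleton_iff, Finset.sum_eq_zero_iff, Finset.mem_univ, true_implies]
    constructor
    · intro h; funext s; exact h s
    · intro h s; rw [h]; rfl
  have hcomplsum :
      ∑' j : ({j : Fin d → ℕ | 1 ≤ ∑ s, j s}ᶜ : Set (Fin d → ℕ)), f j.1 = 1 := by
    rw [hcompl, tsum_singleton]
    simp [hfdef]
  have h1q : 1 - q = ENNReal.ofReal (1 - δ ^ 2) := by
    rw [ENNReal.ofReal_sub _ hδ2', ENNReal.ofReal_one]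
  have hA1 : (1:ℝ) ≤ ((1 - δ ^ 2) ^ d)⁻¹ := by
    rw [le_inv_comm₀ one_pos (pow_pos hpos d)]
    simpa using pow_le_one₀ hpos.le (by linarith)
  have hrhs : ENNReal.ofReal (((1 - δ ^ 2) ^ d)⁻¹ - 1) + 1 = ((1 - q)⁻¹) ^ d := by
    rw [h1q, ← ENNReal.ofReal_inv_of_pos hpos, ← ENNReal.ofReal_pow (by positivity),
      ← inv_pow]
    rw [ENNReal.ofReal_sub _ zero_le_one, ENNReal.ofReal_one]
    exact tsub_add_cancel_of_le (by
      rw [← ENNReal.ofReal_one]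
      exact ENNReal.ofReal_le_ofReal (by rw [inv_pow]; exact hA1))
  have := hsplit.trans htotal
  rw [hcomplsum, ← hrhs] at this
  have hcancel := WithTop.add_right_cancel (by simp : (1:ℝ≥0∞) ≠ ⊤) this
  rw [← hcancel]
  rfl

/-- If each coefficient `t^i_j : X → ℂ` is `(C/R^{|j|}, α)`-Hölder and
vanishes somewhere, then the power series `Σ_{|j|≥1} t^i_j(x) Z^j` converges absolutely
on the open polydisc of radius `R`, and for every `0 < δ < 1` the map
`x ↦ (t^i_j(x))` is Hölder into the Hilbert space of radius `δR`, with
`‖·‖²`-bound `d C² ((1-δ²)^{-d} - 1) dist(x,y)^{2α}`. -/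
theorem series_convergence_and_holder_of_coefficients
    {X : Type*} [MetricSpace X] [CompactSpace X]
    (hdiam : Metric.diam (Set.univ : Set X) ≤ 1)
    (d : ℕ) (hd : 1 ≤ d) (R C α : ℝ) (hR : 0 < R) (hC : 0 < C)
    (hα : α ∈ Set.Ioc (0 : ℝ) 1)
    (t : Fin d → (Fin d → ℕ) → X → ℂ)
    (hHolder : ∀ (i : Fin d) (j : Fin d → ℕ), 1 ≤ ∑ s, j s →
      ∀ x y : X,
        ‖t i j x - t i j y‖ ≤ C / R ^ (∑ s, j s) * dist x y ^ α)
    (hvanish : ∀ (i : Fin d) (j : Fin d → ℕ), 1 ≤ ∑ s, j s →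
      ∃ x₀ : X, t i j x₀ = 0) :
    (∀ (x : X) (i : Fin d) (Z : Fin d → ℂ), (∀ s, ‖Z s‖ < R) →
      Summable fun j : {j : Fin d → ℕ // 1 ≤ ∑ s, j s} =>
        ‖t i j.1 x * ∏ s, Z s ^ j.1 s‖) ∧
    (∀ δ : ℝ, 0 < δ → δ < 1 → ∀ x y : X,
      (∑' (i : Fin d) (j : {j : Fin d → ℕ // 1 ≤ ∑ s, j s}),
          ENNReal.ofReal
            (‖t i j.1 x - t i j.1 y‖ ^ 2 * (δ * R) ^ (2 * ∑ s, j.1 s)))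
        ≤ ENNReal.ofReal
            (d * C ^ 2 * (((1 - δ ^ 2) ^ d)⁻¹ - 1) * dist x y ^ (2 * α))) := by
  obtain ⟨hα0, hα1⟩ := hα
  have hdist1 : ∀ x y : X, dist x y ≤ 1 := fun x y =>
    le_trans (Metric.dist_le_diam_of_mem isCompact_univ.isBounded
      (Set.mem_univ x) (Set.mem_univ y)) hdiam
  have hdistpow : ∀ x y : X, dist x y ^ α ≤ 1 := fun x y =>
    Real.rpow_le_one dist_nonneg (hdist1 x y) hα0.le
  have habs : ∀ (i : Fin d) (j : Fin d → ℕ), 1 ≤ ∑ s, j s → ∀ x : X,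
      ‖t i j x‖ ≤ C / R ^ (∑ s, j s) := by
    intro i j hj x
    obtain ⟨x₀, hx₀⟩ := hvanish i j hj
    have h := hHolder i j hj x x₀
    rw [hx₀, sub_zero] at h
    calc ‖t i j x‖ ≤ C / R ^ (∑ s, j s) * dist x x₀ ^ α := h
      _ ≤ C / R ^ (∑ s, j s) * 1 :=
          mul_le_mul_of_nonneg_left (hdistpow x x₀)
            (div_nonneg hC.le (pow_nonneg hR.le _))
      _ = C / R ^ (∑ s, j s) := mul_one _
  constructor
  · -- Part 1: absolute convergence on the polydisc
    intro x i Z hZ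
    set q : Fin d → ℝ := fun s => ‖Z s‖ / R with hq
    have hq0 : ∀ s, 0 ≤ q s := fun s => div_nonneg (norm_nonneg _) hR.le
    have hq1 : ∀ s, q s < 1 := fun s => (div_lt_one hR).2 (hZ s)
    set F : (Fin d → ℕ) → ℝ≥0∞ :=
      fun j => ENNReal.ofReal (‖t i j x * ∏ s, Z s ^ j s‖) with hF
    have hbound : ∀ j : Fin d → ℕ, 1 ≤ ∑ s, j s →
        F j ≤ ENNReal.ofReal C * ∏ s, ENNReal.ofReal (q s) ^ j s := by
      intro j hj
      have h1 : ‖t i j x * ∏ s, Z s ^ j s‖ ≤ C * ∏ s, q s ^ j s := by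
        rw [norm_mul, norm_prod]
        simp only [norm_pow]
        have hP : (0:ℝ) ≤ ∏ s, ‖Z s‖ ^ j s :=
          Finset.prod_nonneg fun s _ => pow_nonneg (norm_nonneg _) _
        calc ‖t i j x‖ * ∏ s, ‖Z s‖ ^ j s
            ≤ C / R ^ (∑ s, j s) * ∏ s, ‖Z s‖ ^ j s :=
              mul_le_mul_of_nonneg_right (habs i j hj x) hP
          _ = C * ∏ s, q s ^ j s := by
              simp only [hq, div_pow, Finset.prod_div_distrib,
                Finset.prod_pow_eq_pow_sum]
              field_simp
      calc F j ≤ ENNReal.ofReal (C * ∏ s, q s ^ j s) := ENNReal.ofReal_le_ofReal h1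
        _ = ENNReal.ofReal C * ∏ s, ENNReal.ofReal (q s) ^ j s := by
            rw [ENNReal.ofReal_mul hC.le,
              ENNReal.ofReal_prod_of_nonneg fun s _ => pow_nonneg (hq0 s) _]
            simp_rw [ENNReal.ofReal_pow (hq0 _)]
    have hfin : ∑' j : {j : Fin d → ℕ // 1 ≤ ∑ s, j s}, F j.1 ≠ ⊤ := by
      have h2 : ∑' j : {j : Fin d → ℕ // 1 ≤ ∑ s, j s}, F j.1
          ≤ ∑' j : Fin d → ℕ, (ENNReal.ofReal C * ∏ s, ENNReal.ofReal (q s) ^ j s) := by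
        calc ∑' j : {j : Fin d → ℕ // 1 ≤ ∑ s, j s}, F j.1
            ≤ ∑' j : {j : Fin d → ℕ // 1 ≤ ∑ s, j s},
                (ENNReal.ofReal C * ∏ s, ENNReal.ofReal (q s) ^ j.1 s) :=
              ENNReal.tsum_le_tsum fun j => hbound j.1 j.2
          _ ≤ _ := ENNReal.tsum_comp_le_tsum_of_injective Subtype.val_injective _
      have h3 : ∑' j : Fin d → ℕ, (ENNReal.ofReal C * ∏ s, ENNReal.ofReal (q s) ^ j s)
          = ENNReal.ofReal C * ∏ s, (1 - ENNReal.ofReal (q s))⁻¹ := by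
        rw [ENNReal.tsum_mul_left, tsum_pi_pow_aux]
        congr 1
        exact Finset.prod_congr rfl fun s _ => ENNReal.tsum_geometric _
      refine ne_top_of_le_ne_top ?_ (h2.trans_eq h3)
      refine ENNReal.mul_ne_top ENNReal.ofReal_ne_top ?_
      refine (ENNReal.prod_lt_top ?_).ne
      intro s _
      rw [lt_top_iff_ne_top, Ne, ENNReal.inv_eq_top, tsub_eq_zero_iff_le]
      exact not_le.2 (ENNReal.ofReal_lt_one.2 (hq1 s))
    have heq : (fun j : {j : Fin d → ℕ // 1 ≤ ∑ s, j s} =>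
        ‖t i j.1 x * ∏ s, Z s ^ j.1 s‖) = fun j => (F j.1).toReal := by
      funext j
      rw [hF, ENNReal.toReal_ofReal (norm_nonneg _)]
    rw [heq]
    exact ENNReal.summable_toReal hfin
  · -- Part 2: the Hölder estimate
    intro δ hδ0 hδ1 x y
    have hAnn : (0:ℝ) ≤ dist x y ^ (2 * α) := Real.rpow_nonneg dist_nonneg _
    have hd2 : (dist x y ^ α) ^ 2 = dist x y ^ (2 * α) := by
      rw [← Real.rpow_natCast (dist x y ^ α) 2, ← Real.rpow_mul dist_nonneg]
      norm_num [mul_comm]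
    have hA1 : (0:ℝ) ≤ ((1 - δ ^ 2) ^ d)⁻¹ - 1 := by
      have hpos : (0:ℝ) < 1 - δ ^ 2 := by nlinarith
      have : (1:ℝ) ≤ ((1 - δ ^ 2) ^ d)⁻¹ := by
        rw [le_inv_comm₀ one_pos (pow_pos hpos d)]
        simpa using pow_le_one₀ hpos.le (by nlinarith)
      linarith
    have hterm : ∀ (i : Fin d) (j : Fin d → ℕ), 1 ≤ ∑ s, j s →
        ENNReal.ofReal
            (‖t i j x - t i j y‖ ^ 2 * (δ * R) ^ (2 * ∑ s, j s))
          ≤ ENNReal.ofReal (C ^ 2 * dist x y ^ (2 * α))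
              * ENNReal.ofReal (δ ^ 2) ^ (∑ s, j s) := by
      intro i j hj
      set n := ∑ s, j s with hn
      have h2 : ‖t i j x - t i j y‖ ^ 2
          ≤ (C / R ^ n * dist x y ^ α) ^ 2 :=
        pow_le_pow_left₀ (norm_nonneg _) (hHolder i j hj x y) 2
      have key : (C / R ^ n * dist x y ^ α) ^ 2 * (δ * R) ^ (2 * n)
          = C ^ 2 * dist x y ^ (2 * α) * (δ ^ 2) ^ n := by
        rw [← hd2, mul_pow, div_pow, ← pow_mul R n 2, mul_comm n 2, pow_mul R 2 n,
          pow_mul (δ * R), mul_pow δ R]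
        have hR2 : ((R:ℝ) ^ 2) ^ n ≠ 0 := pow_ne_zero _ (pow_ne_zero _ hR.ne')
        field_simp
        ring
      have h3 : ‖t i j x - t i j y‖ ^ 2 * (δ * R) ^ (2 * n)
          ≤ C ^ 2 * dist x y ^ (2 * α) * (δ ^ 2) ^ n := by
        rw [← key]
        exact mul_le_mul_of_nonneg_right h2
          (pow_nonneg (mul_nonneg hδ0.le hR.le) _)
      calc ENNReal.ofReal (‖t i j x - t i j y‖ ^ 2 * (δ * R) ^ (2 * n))
          ≤ ENNReal.ofReal (C ^ 2 * dist x y ^ (2 * α) * (δ ^ 2) ^ n) :=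
            ENNReal.ofReal_le_ofReal h3
        _ = ENNReal.ofReal (C ^ 2 * dist x y ^ (2 * α))
              * ENNReal.ofReal (δ ^ 2) ^ n := by
            rw [ENNReal.ofReal_mul (by positivity), ENNReal.ofReal_pow (sq_nonneg δ)]
    calc (∑' (i : Fin d) (j : {j : Fin d → ℕ // 1 ≤ ∑ s, j s}),
            ENNReal.ofReal
              (‖t i j.1 x - t i j.1 y‖ ^ 2 * (δ * R) ^ (2 * ∑ s, j.1 s)))
        ≤ ∑' (i : Fin d),
            (ENNReal.ofReal (C ^ 2 * dist x y ^ (2 * α))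
              * ENNReal.ofReal (((1 - δ ^ 2) ^ d)⁻¹ - 1)) := by
          refine ENNReal.tsum_le_tsum fun i => ?_
          calc (∑' j : {j : Fin d → ℕ // 1 ≤ ∑ s, j s},
                  ENNReal.ofReal
                    (‖t i j.1 x - t i j.1 y‖ ^ 2
                      * (δ * R) ^ (2 * ∑ s, j.1 s)))
              ≤ ∑' j : {j : Fin d → ℕ // 1 ≤ ∑ s, j s},
                  ENNReal.ofReal (C ^ 2 * dist x y ^ (2 * α))
                    * ENNReal.ofReal (δ ^ 2) ^ (∑ s, j.1 s) :=
                ENNReal.tsum_le_tsum fun j => hterm i j.1 j.2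
            _ = ENNReal.ofReal (C ^ 2 * dist x y ^ (2 * α))
                  * ENNReal.ofReal (((1 - δ ^ 2) ^ d)⁻¹ - 1) := by
                rw [ENNReal.tsum_mul_left, tsum_subtype_geom_aux d hδ0 hδ1]
      _ = ENNReal.ofReal (d * C ^ 2 * (((1 - δ ^ 2) ^ d)⁻¹ - 1) * dist x y ^ (2 * α)) := by
          rw [tsum_fintype, Finset.sum_const, Finset.card_univ, Fintype.card_fin,
            nsmul_eq_mul, ← ENNReal.ofReal_natCast d, ← ENNReal.ofReal_mul (by positivity),
            ← ENNReal.ofReal_mul (by positivity)]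
          congr 1
          ring
end

section
/- Let X be a metric space, T : X → X a map, α ∈ (0,1], and let ψ : X → ℂ be a (C,α)-Hölder-continuous function. Suppose x, p ∈ X, k ≥ 1, δ > 0 and λ > 0 are such that dist(T^j x, T^j p) ≤ δ·e^{−λ·min(j, k−j)} for all 0 ≤ j ≤ k. Then |Σ_{j=0}^{k−1} (ψ(T^j x) − ψ(T^j p))| ≤ 2·C·δ^α / (1 − e^{−λα}). -/
/-- If two orbit segments of length `k` are exponentially `δ`-close
with exponent `λ`, then the Birkhoff sums of a `(C, α)`-Hölder function `ψ` along the
two segments differ by at most `2 C δ^α / (1 - e^{-λα})`. -/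
theorem birkhoff_sums_close_of_orbits_close
    {X : Type*} [MetricSpace X] (T : X → X)
    (C α : ℝ) (hC : 0 < C) (hα : α ∈ Set.Ioc (0 : ℝ) 1)
    (ψ : X → ℂ)
    (hψ : ∀ x y : X, ‖ψ x - ψ y‖ ≤ C * dist x y ^ α)
    (x p : X) (k : ℕ) (hk : 1 ≤ k) (δ lam : ℝ) (hδ : 0 < δ) (hlam : 0 < lam)
    (hclose : ∀ j ≤ k,
      dist (T^[j] x) (T^[j] p) ≤ δ * Real.exp (-lam * (min j (k - j) : ℕ))) :
    ‖∑ j ∈ Finset.range k, (ψ (T^[j] x) - ψ (T^[j] p))‖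
      ≤ 2 * C * δ ^ α / (1 - Real.exp (-lam * α)) := by
  obtain ⟨hα0, hα1⟩ := hα
  set r : ℝ := Real.exp (-lam * α) with hr
  have hr0 : 0 < r := Real.exp_pos _
  have hr1 : r < 1 := by
    rw [hr, Real.exp_lt_one_iff]
    nlinarith
  have hsub : 0 < 1 - r := by linarith
  have hgeom : ∀ n : ℕ, ∑ j ∈ Finset.range n, r ^ j ≤ 1 / (1 - r) := by
    intro n
    rw [geom_sum_eq (ne_of_lt hr1) n]
    have h : (r ^ n - 1) / (r - 1) = (1 - r ^ n) / (1 - r) := by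
      rw [← neg_div_neg_eq]; ring_nf
    rw [h, div_le_div_iff₀ hsub hsub]
    have : (0:ℝ) ≤ r ^ n := pow_nonneg hr0.le n
    nlinarith
  -- pointwise bound
  have hterm : ∀ j ∈ Finset.range k,
      ‖ψ (T^[j] x) - ψ (T^[j] p)‖ ≤ C * δ ^ α * (r ^ j + r ^ (k - j)) := by
    intro j hj
    have hjk : j ≤ k := (Finset.mem_range.mp hj).le
    have h1 := hψ (T^[j] x) (T^[j] p)
    have h2 := hclose j hjk
    have hd : dist (T^[j] x) (T^[j] p) ^ α
        ≤ (δ * Real.exp (-lam * (min j (k - j) : ℕ))) ^ α :=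
      Real.rpow_le_rpow dist_nonneg h2 hα0.le
    have heq : (δ * Real.exp (-lam * (min j (k - j) : ℕ))) ^ α
        = δ ^ α * r ^ (min j (k - j)) := by
      rw [Real.mul_rpow hδ.le (Real.exp_pos _).le, ← Real.exp_mul, hr]
      congr 1
      rw [← Real.exp_nat_mul]
      ring_nf
    have hmin : r ^ (min j (k - j)) ≤ r ^ j + r ^ (k - j) := by
      rcases min_cases j (k - j) with ⟨h, _⟩ | ⟨h, _⟩ <;> rw [h] <;>
        [skip; skip] <;>
        nlinarith [pow_nonneg hr0.le j, pow_nonneg hr0.le (k - j)]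
    calc ‖ψ (T^[j] x) - ψ (T^[j] p)‖
        ≤ C * dist (T^[j] x) (T^[j] p) ^ α := h1
      _ ≤ C * (δ ^ α * r ^ (min j (k - j))) := by
          rw [← heq]; exact mul_le_mul_of_nonneg_left hd hC.le
      _ ≤ C * δ ^ α * (r ^ j + r ^ (k - j)) := by
          rw [mul_assoc]
          refine mul_le_mul_of_nonneg_left ?_ hC.le
          exact mul_le_mul_of_nonneg_left hmin (Real.rpow_nonneg hδ.le α)
  have hsum1 : ∑ j ∈ Finset.range k, r ^ j ≤ 1 / (1 - r) := hgeom k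
  have hsum2 : ∑ j ∈ Finset.range k, r ^ (k - j) ≤ 1 / (1 - r) := by
    have : ∑ j ∈ Finset.range k, r ^ (k - j)
        = ∑ j ∈ Finset.range k, r ^ (j + 1) := by
      rw [← Finset.sum_range_reflect]
      apply Finset.sum_congr rfl
      intro j hj
      have hjk : j < k := Finset.mem_range.mp hj
      congr 1
      omega
    rw [this]
    calc ∑ j ∈ Finset.range k, r ^ (j + 1)
        = r * ∑ j ∈ Finset.range k, r ^ j := by
          rw [Finset.mul_sum]; apply Finset.sum_congr rfl; intro j _; ring
      _ ≤ 1 * ∑ j ∈ Finset.range k, r ^ j := by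
          refine mul_le_mul_of_nonneg_right hr1.le ?_
          exact Finset.sum_nonneg fun j _ => pow_nonneg hr0.le j
      _ = ∑ j ∈ Finset.range k, r ^ j := one_mul _
      _ ≤ 1 / (1 - r) := hgeom k
  calc ‖∑ j ∈ Finset.range k, (ψ (T^[j] x) - ψ (T^[j] p))‖
      ≤ ∑ j ∈ Finset.range k, ‖ψ (T^[j] x) - ψ (T^[j] p)‖ := by
        exact norm_sum_le _ _
    _ ≤ ∑ j ∈ Finset.range k, C * δ ^ α * (r ^ j + r ^ (k - j)) :=
        Finset.sum_le_sum hterm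
    _ = C * δ ^ α * (∑ j ∈ Finset.range k, r ^ j + ∑ j ∈ Finset.range k, r ^ (k - j)) := by
        simp only [mul_add, Finset.mul_sum, Finset.sum_add_distrib]
    _ ≤ C * δ ^ α * (1 / (1 - r) + 1 / (1 - r)) := by
        refine mul_le_mul_of_nonneg_left (add_le_add hsum1 hsum2) ?_
        exact mul_nonneg hC.le (Real.rpow_nonneg hδ.le α)
    _ = 2 * C * δ ^ α / (1 - r) := by
        field_simp
        ring
end
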